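/- Let r = min{m,n}, s ∈ {0,1,…,r}, S = {y ∈ ℝ^{m×n} : rank(y) ≤ s}, and let x̄ ∈ S with rank(x̄) < s. Then the proximal normal cone to S at x̄ is trivial: N^P_S(x̄) = {0}. -/

import Mathlib

open Filter Topology Matrix Set
open scoped ENNReal

attribute [local instance] Matrix.frobeniusNormedAddCommGroup

noncomputable section

namespace RankPaper

variable {m n : ℕ}

/-- Singular values of `x` in decreasing order (`svals x ⟨0,_⟩ = σ₁(x)` is the largest),
indexed by `Fin (min m n)`; defined as the square roots of the decreasingly sorted
eigenvalues of `xᴴ * x`. -/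
noncomputable def svals (x : Matrix (Fin m) (Fin n) ℝ) : Fin (min m n) → ℝ := fun j =>
  Real.sqrt
    (((Matrix.isHermitian_conjTranspose_mul_self x).eigenvalues ∘
        ⇑(Tuple.sort (Matrix.isHermitian_conjTranspose_mul_self x).eigenvalues))
      (Fin.rev (Fin.castLE (min_le_right m n) j)))

/-- The `m × n` diagonal matrix of singular values `Σ(x)`. -/
noncomputable def SigmaMat (x : Matrix (Fin m) (Fin n) ℝ) : Matrix (Fin m) (Fin n) ℝ :=
  Matrix.of fun i j =>
    if h : (i : ℕ) = (j : ℕ) ∧ (i : ℕ) < min m n then svals x ⟨(i : ℕ), h.2⟩ else 0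

/-- The truncated diagonal matrix `Σ_s(x)` keeping only the `s` largest singular values. -/
noncomputable def SigmaTrunc (s : ℕ) (x : Matrix (Fin m) (Fin n) ℝ) :
    Matrix (Fin m) (Fin n) ℝ :=
  Matrix.of fun i j =>
    if h : (i : ℕ) = (j : ℕ) ∧ (i : ℕ) < min m n ∧ (i : ℕ) < s then
      svals x ⟨(i : ℕ), h.2.1⟩ else 0

/-- The (multivalued) projection onto a set `Ω ⊆ ℝ^{m×n}` w.r.t. the Frobenius norm. -/
def projSet (Ω : Set (Matrix (Fin m) (Fin n) ℝ)) (x : Matrix (Fin m) (Fin n) ℝ) :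
    Set (Matrix (Fin m) (Fin n) ℝ) :=
  {y | y ∈ Ω ∧ ∀ z ∈ Ω, ‖x - y‖ ≤ ‖x - z‖}

/-- The proximal normal cone to `Ω` at `xb`: all vectors `t • (x - xb)` with `t ≥ 0`
and `xb` a nearest point of `Ω` to `x`. -/
def proxNormalCone (Ω : Set (Matrix (Fin m) (Fin n) ℝ)) (xb : Matrix (Fin m) (Fin n) ℝ) :
    Set (Matrix (Fin m) (Fin n) ℝ) :=
  {v | ∃ t : ℝ, 0 ≤ t ∧ ∃ x, xb ∈ projSet Ω x ∧ v = t • (x - xb)}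

/-- The limiting (Mordukhovich) normal cone to `Ω` at `xb`, described via limits of
proximal-normal directions `v^k ∈ cone (x^k - P_Ω(x^k))` along sequences `x^k → xb`. -/
def normalCone (Ω : Set (Matrix (Fin m) (Fin n) ℝ)) (xb : Matrix (Fin m) (Fin n) ℝ) :
    Set (Matrix (Fin m) (Fin n) ℝ) :=
  {v | ∃ x w : ℕ → Matrix (Fin m) (Fin n) ℝ,
      Tendsto x atTop (𝓝 xb) ∧ Tendsto w atTop (𝓝 v) ∧
      ∀ k, ∃ t : ℝ, 0 ≤ t ∧ ∃ y ∈ projSet Ω (x k), w k = t • (x k - y)}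

/-- The row space of `x`, i.e. `range (xᵀ) = ker(x)ᗮ ⊆ ℝⁿ`. -/
def rowSpace (x : Matrix (Fin m) (Fin n) ℝ) : Submodule ℝ (Fin n → ℝ) :=
  LinearMap.range (Matrix.mulVecLin xᵀ)

/-- `𝕁(x, α) = {j : σ_j(x) ≥ α}` (in particular empty for `α = ∞`). -/
def Jset (x : Matrix (Fin m) (Fin n) ℝ) (α : ℝ≥0∞) : Set (Fin (min m n)) :=
  {j | α ≤ ENNReal.ofReal (svals x j)}

/-- `α_s(x) = sup {α : |𝕁(x,α)| ≥ s}`. -/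
noncomputable def alphaS (s : ℕ) (x : Matrix (Fin m) (Fin n) ℝ) : ℝ≥0∞ :=
  sSup {α : ℝ≥0∞ | s ≤ (Jset x α).ncard}



lemma aux_rank_add_le (A B : Matrix (Fin m) (Fin n) ℝ) :
    (A + B).rank ≤ A.rank + B.rank := by
  classical
  simp only [Matrix.rank]
  rw [Matrix.mulVecLin_add]
  refine le_trans (Submodule.finrank_mono ?_) (Submodule.finrank_add_le_finrank_add_finrank _ _)
  rintro _ ⟨v, rfl⟩
  exact Submodule.add_mem_sup ⟨v, rfl⟩ ⟨v, rfl⟩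

lemma aux_rank_std_le (i : Fin m) (j : Fin n) (c : ℝ) :
    (Matrix.single i j c).rank ≤ 1 := by
  classical
  have h1 : (Matrix.single i j (1:ℝ)).rank ≤ 1 := by
    rw [single_eq_single_vecMulVec_single, vecMulVec_eq Unit]
    exact le_trans (Matrix.rank_mul_le_left _ _)
      (le_trans (Matrix.rank_le_card_width _) (by simp))
  calc (Matrix.single i j c).rank = (c • Matrix.single i j (1:ℝ)).rank := by
        rw [smul_single, smul_eq_mul, mul_one]
    _ ≤ (Matrix.single i j (1:ℝ)).rank := by
        simp only [Matrix.rank]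
        refine Submodule.finrank_mono ?_
        rintro _ ⟨v, rfl⟩
        rw [Matrix.mulVecLin_apply, Matrix.smul_mulVec]
        exact Submodule.smul_mem _ c ⟨v, Matrix.mulVecLin_apply _ _⟩
    _ ≤ 1 := h1

lemma aux_norm_lt (w : Matrix (Fin m) (Fin n) ℝ) (i : Fin m) (j : Fin n) (h : w i j ≠ 0) :
    ‖w - Matrix.single i j (w i j)‖ < ‖w‖ := by
  rw [frobenius_norm_def, frobenius_norm_def]
  refine Real.rpow_lt_rpow ?_ ?_ (by norm_num)
  · exact Finset.sum_nonneg fun _ _ => Finset.sum_nonneg fun _ _ =>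
      Real.rpow_nonneg (norm_nonneg _) _
  · refine Finset.sum_lt_sum (fun i' _ => Finset.sum_le_sum fun j' _ => ?_)
      ⟨i, Finset.mem_univ i, ?_⟩
    · rcases eq_or_ne (i', j') (i, j) with he | he
      · obtain ⟨rfl, rfl⟩ := Prod.mk.injEq .. ▸ he
        simp [Matrix.sub_apply, Matrix.single]
        positivity
      · have : ¬(i = i' ∧ j = j') := by
          rintro ⟨rfl, rfl⟩; exact he rfl
        simp [Matrix.sub_apply, Matrix.single, this]
    · refine Finset.sum_lt_sum (fun j' _ => ?_) ⟨j, Finset.mem_univ j, ?_⟩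
      · rcases eq_or_ne j' j with rfl | he
        · simp [Matrix.sub_apply, Matrix.single]
          positivity
        · have hne : j ≠ j' := Ne.symm he
          simp [Matrix.sub_apply, Matrix.single, hne]
      · simp only [Matrix.sub_apply, Matrix.single, Matrix.of_apply, and_self,
          if_true, sub_self, norm_zero]
        rw [Real.zero_rpow (by norm_num)]
        exact Real.rpow_pos_of_pos (norm_pos_iff.2 h) _

/-- at a point `xb` of `S = {y : rank y ≤ s}` with `rank xb < s`, the
proximal normal cone is trivial. -/
theorem proxNormalCone_trivial (m n s : ℕ) (hs : s ≤ min m n)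
    (xb : Matrix (Fin m) (Fin n) ℝ) (hxb : xb.rank < s) :
    proxNormalCone {y : Matrix (Fin m) (Fin n) ℝ | y.rank ≤ s} xb = {0} := by
  ext v
  simp only [Set.mem_singleton_iff]
  constructor
  · rintro ⟨t, ht, x, ⟨hxm, hmin⟩, rfl⟩
    have hx : x = xb := by
      by_contra hne
      have hw : x - xb ≠ 0 := sub_ne_zero.2 hne
      obtain ⟨i, j, hij⟩ : ∃ i j, (x - xb) i j ≠ 0 := by
        by_contra h'
        push_neg at h'
        exact hw (Matrix.ext fun i j => by simpa using h' i j)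
      set u : Matrix (Fin m) (Fin n) ℝ := Matrix.single i j ((x - xb) i j) with hu
      have hz : (xb + u).rank ≤ s := by
        calc (xb + u).rank ≤ xb.rank + u.rank := aux_rank_add_le xb u
          _ ≤ xb.rank + 1 := Nat.add_le_add_left (aux_rank_std_le i j _) _
          _ ≤ s := hxb
      have hle : ‖x - xb‖ ≤ ‖x - (xb + u)‖ := hmin _ hz
      have hlt : ‖x - (xb + u)‖ < ‖x - xb‖ := by
        rw [sub_add_eq_sub_sub]
        exact aux_norm_lt (x - xb) i j hij
      exact absurd hle (not_le.2 hlt)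
    rw [hx, sub_self, smul_zero]
  · rintro rfl
    exact ⟨0, le_refl 0, xb, ⟨le_of_lt hxb, fun z _ => by simp⟩, by simp⟩

end RankPaper
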